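/- Let Σ be a symmetric positive definite d×d matrix with spectral norm ‖Σ‖₂ ≤ D₀, and let β ∈ ℝ^d be supported on a set S with |S| ≤ s. If Σ satisfies the restricted eigenvalue property with constants (s,η), then ‖β‖₁ ≤ (√(D₀ s)/η)·√(βᵀΣβ); equivalently, with Δ_μ = Σβ, ‖β‖₁ ≤ (√(D₀ s)/η)·√(Δ_μᵀΣ⁻¹Δ_μ). -/

import Mathlib

open MeasureTheory Matrix Real
open scoped ENNReal

noncomputable def vecL1 {d : ℕ} (v : Fin d → ℝ) : ℝ := ∑ i, |v i|
noncomputable def vecL2 {d : ℕ} (v : Fin d → ℝ) : ℝ := Real.sqrt (∑ i, (v i) ^ 2)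
noncomputable def vecLinf {d : ℕ} (v : Fin d → ℝ) : ℝ := ⨆ i, |v i|
noncomputable def matLinf {d : ℕ} (A : Matrix (Fin d) (Fin d) ℝ) : ℝ := ⨆ i, ⨆ j, |A i j|

/-- density of N(m, S) -/
noncomputable def mvGaussian {d : ℕ} (m : Fin d → ℝ) (S : Matrix (Fin d) (Fin d) ℝ) :
    Measure (Fin d → ℝ) :=
  MeasureTheory.volume.withDensity fun x =>
    ENNReal.ofReal (((2 * π) ^ d * S.det) ^ (-(1 : ℝ) / 2) *
      Real.exp (-(1 / 2) * ((x - m) ⬝ᵥ (S⁻¹ *ᵥ (x - m)))))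

/-- joint law of (X, Y) -/
noncomputable def mixtureLaw {d : ℕ} (m1 m2 : Fin d → ℝ) (S : Matrix (Fin d) (Fin d) ℝ) :
    Measure ((Fin d → ℝ) × Fin 2) :=
  ((2 : ℝ≥0∞)⁻¹ • ((mvGaussian m1 S).prod (Measure.dirac 0))) +
  ((2 : ℝ≥0∞)⁻¹ • ((mvGaussian m2 S).prod (Measure.dirac 1)))

noncomputable def overlap {d : ℕ} (P : Measure ((Fin d → ℝ) × Fin 2))
    (ψ : (Fin d → ℝ) → Fin 2) : ℝ :=
  ⨅ pi : Equiv.Perm (Fin 2), (P {p | ψ p.1 ≠ pi p.2}).toReal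

noncomputable def excessErr {d : ℕ} (P : Measure ((Fin d → ℝ) × Fin 2))
    (ψ : (Fin d → ℝ) → Fin 2) : ℝ :=
  overlap P ψ - ⨅ ψ' : {f : (Fin d → ℝ) → Fin 2 // Measurable f}, overlap P ψ'.1

noncomputable def stdNormalPDF (x : ℝ) : ℝ := (Real.sqrt (2 * π))⁻¹ * Real.exp (-(x ^ 2) / 2)
noncomputable def stdNormalCDF (x : ℝ) : ℝ := ∫ u in Set.Iic x, stdNormalPDF u

def RestrictedEigenvalue {d : ℕ} (S : Matrix (Fin d) (Fin d) ℝ) (s : ℕ) (η : ℝ) : Prop :=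
  ∀ T : Finset (Fin d), T.card ≤ s → ∀ v : Fin d → ℝ, v ≠ 0 →
    (∑ i ∈ Tᶜ, |v i|) ≤ (∑ i ∈ T, |v i|) → η * vecL2 v ≤ vecL2 (S *ᵥ v)


lemma vecL2_sq {d : ℕ} (v : Fin d → ℝ) : (Real.sqrt (∑ i, (v i)^2)) ^ 2 = v ⬝ᵥ v := by
  rw [Real.sq_sqrt (by positivity)]
  simp [dotProduct, sq]

lemma dot_le_L2 {d : ℕ} (u v : Fin d → ℝ) :
    u ⬝ᵥ v ≤ Real.sqrt (∑ i, (u i)^2) * Real.sqrt (∑ i, (v i)^2) := by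
  have h := Finset.sum_mul_sq_le_sq_mul_sq Finset.univ u v
  calc u ⬝ᵥ v ≤ |u ⬝ᵥ v| := le_abs_self _
    _ = Real.sqrt ((u ⬝ᵥ v)^2) := (Real.sqrt_sq_eq_abs _).symm
    _ ≤ Real.sqrt ((∑ i, (u i)^2) * (∑ i, (v i)^2)) := Real.sqrt_le_sqrt (by simpa [dotProduct] using h)
    _ = _ := Real.sqrt_mul (by positivity) _

lemma sym_dot {d : ℕ} {M : Matrix (Fin d) (Fin d) ℝ} (hM : M.IsHermitian)
    (a b : Fin d → ℝ) : a ⬝ᵥ (M *ᵥ b) = (M *ᵥ a) ⬝ᵥ b := by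
  rw [Matrix.dotProduct_mulVec, ← Matrix.mulVec_transpose,
    ← Matrix.conjTranspose_eq_transpose_of_trivial, hM.eq]

lemma my_le_sqrt {x y : ℝ} (hx : 0 ≤ x) (h : x^2 ≤ y) : x ≤ Real.sqrt y := by
  rw [← Real.sqrt_sq hx]; exact Real.sqrt_le_sqrt h

lemma cs_psd {d : ℕ} {M : Matrix (Fin d) (Fin d) ℝ} (hM : M.PosSemidef) (x y : Fin d → ℝ) :
    (x ⬝ᵥ (M *ᵥ y))^2 ≤ (x ⬝ᵥ (M *ᵥ x)) * (y ⬝ᵥ (M *ᵥ y)) := by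
  obtain ⟨B, hB⟩ : ∃ B : Matrix (Fin d) (Fin d) ℝ, M = Bᴴ * B := by
    open scoped MatrixOrder in exact CStarAlgebra.nonneg_iff_eq_star_mul_self.mp hM.nonneg
  have h : ∀ a b : Fin d → ℝ, a ⬝ᵥ (M *ᵥ b) = (B *ᵥ a) ⬝ᵥ (B *ᵥ b) := by
    intro a b
    rw [hB, Matrix.conjTranspose_eq_transpose_of_trivial, ← Matrix.mulVec_mulVec,
      Matrix.dotProduct_mulVec, ← Matrix.mulVec_transpose, Matrix.transpose_transpose]
  rw [h x y, h x x, h y y]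
  simpa [dotProduct, sq] using Finset.sum_mul_sq_le_sq_mul_sq Finset.univ (B *ᵥ x) (B *ᵥ y)

/-- ℓ1-norm bound via the restricted eigenvalue property and spectral norm:
‖β‖₁ ≤ (√(D₀s)/η)·√(βᵀΣβ) = (√(D₀s)/η)·√(Δ_μᵀΣ⁻¹Δ_μ) with Δ_μ = Σβ. -/
theorem l1_bound_via_RE {d : ℕ}
    (Sig : Matrix (Fin d) (Fin d) ℝ) (hSig : Sig.PosDef)
    (s : ℕ) (η D0 : ℝ) (hη : 0 < η) (hD0 : 0 ≤ D0)
    -- spectral norm bound ‖Σ‖₂ ≤ D₀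
    (hspec : ∀ v : Fin d → ℝ, vecL2 (Sig *ᵥ v) ≤ D0 * vecL2 v)
    (β : Fin d → ℝ)
    -- β is supported on a set of at most s coordinates
    (hsupp : Set.ncard {i | β i ≠ 0} ≤ s)
    -- (A3) restricted eigenvalue property with constants (s, η)
    (hRE : RestrictedEigenvalue Sig s η)
    (Δ : Fin d → ℝ) (hΔ : Δ = Sig *ᵥ β) :
    vecL1 β ≤ Real.sqrt (D0 * s) / η * Real.sqrt (β ⬝ᵥ (Sig *ᵥ β)) ∧
    vecL1 β ≤ Real.sqrt (D0 * s) / η * Real.sqrt (Δ ⬝ᵥ (Sig⁻¹ *ᵥ Δ)) := by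
    classical
  have hL2nn : ∀ v : Fin d → ℝ, 0 ≤ vecL2 v := fun v => Real.sqrt_nonneg _
  -- reduce second statement to first
  have hinv : Sig⁻¹ *ᵥ Δ = β := by
    rw [hΔ, Matrix.mulVec_mulVec, Matrix.nonsing_inv_mul Sig (isUnit_iff_ne_zero.mpr hSig.det_pos.ne'), Matrix.one_mulVec]
  have heq : Δ ⬝ᵥ (Sig⁻¹ *ᵥ Δ) = β ⬝ᵥ (Sig *ᵥ β) := by
    rw [hinv, hΔ, dotProduct_comm, sym_dot hSig.1]
  rw [heq, and_self]
  -- main statement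
  by_cases hβ : β = 0
  · subst hβ
    have : vecL1 (0 : Fin d → ℝ) = 0 := by simp [vecL1]
    rw [this]
    positivity
  set w : Fin d → ℝ := Sig *ᵥ β with hw
  -- RE applied to the support of β
  set T : Finset (Fin d) := Finset.univ.filter (fun i => β i ≠ 0) with hT
  have hTcard : T.card ≤ s := by
    refine le_trans (le_of_eq ?_) hsupp
    rw [Set.ncard_eq_toFinset_card' {i | β i ≠ 0}]
    congr 1
    ext i
    simp [hT]
  have hRE' : η * vecL2 β ≤ vecL2 w := by
    refine hRE T hTcard β hβ ?_
    have h0 : (∑ i ∈ Tᶜ, |β i|) = 0 := by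
      refine Finset.sum_eq_zero fun i hi => ?_
      have : ¬ (β i ≠ 0) := by simpa [hT] using hi
      simp [not_not.mp this]
    rw [h0]
    exact Finset.sum_nonneg fun i _ => abs_nonneg _
  have hβpos : 0 < vecL2 β := by
    rw [vecL2]
    have : 0 < ∑ i, (β i)^2 := by
      obtain ⟨i, hi⟩ := Function.ne_iff.mp hβ
      exact Finset.sum_pos' (fun j _ => sq_nonneg _) ⟨i, Finset.mem_univ i, by exact pow_pos (abs_pos.mpr hi) 2 |>.trans_eq (by rw [sq_abs])⟩
    exact Real.sqrt_pos.mpr this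
  have hwpos : 0 < vecL2 w := lt_of_lt_of_le (by positivity) hRE'
  -- ℓ1–ℓ2 bound via support
  have hl1 : vecL1 β ≤ Real.sqrt s * vecL2 β := by
    have h1 : vecL1 β = ∑ i ∈ T, |β i| := by
      rw [vecL1, ← Finset.sum_subset (Finset.subset_univ T)]
      intro i _ hi
      have : ¬ (β i ≠ 0) := by simpa [hT] using hi
      simp [not_not.mp this]
    have h2 : (∑ i ∈ T, |β i|)^2 ≤ (s : ℝ) * ∑ i, (β i)^2 := by
      calc (∑ i ∈ T, |β i|)^2 ≤ (T.card : ℝ) * ∑ i ∈ T, |β i|^2 := by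
            exact_mod_cast sq_sum_le_card_mul_sum_sq (s := T) (f := fun i => |β i|)
        _ ≤ (s : ℝ) * ∑ i, (β i)^2 := by
            refine mul_le_mul (by exact_mod_cast hTcard) ?_ (by positivity) (by positivity)
            refine le_trans (le_of_eq (Finset.sum_congr rfl fun i _ => sq_abs _)) ?_
            exact Finset.sum_le_sum_of_subset_of_nonneg (Finset.subset_univ T)
              (fun i _ _ => sq_nonneg _)
    have h3 : vecL1 β ≤ Real.sqrt ((s : ℝ) * ∑ i, (β i)^2) := by
      rw [h1]
      exact my_le_sqrt (Finset.sum_nonneg fun i _ => abs_nonneg _) h2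
    calc vecL1 β ≤ Real.sqrt ((s : ℝ) * ∑ i, (β i)^2) := h3
      _ = Real.sqrt s * vecL2 β := by rw [Real.sqrt_mul (by positivity)]; rfl
  -- bound vecL2 w via √(D0 · βᵀΣβ)
  have hA : 0 ≤ β ⬝ᵥ (Sig *ᵥ β) := hSig.posSemidef.re_dotProduct_nonneg β
  have hww : w ⬝ᵥ w = β ⬝ᵥ (Sig *ᵥ w) := by rw [sym_dot hSig.1 β w, hw]
  have hwSw : w ⬝ᵥ (Sig *ᵥ w) ≤ D0 * (vecL2 w)^2 := by
    calc w ⬝ᵥ (Sig *ᵥ w) ≤ vecL2 w * vecL2 (Sig *ᵥ w) := dot_le_L2 w _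
      _ ≤ vecL2 w * (D0 * vecL2 w) := by
          exact mul_le_mul_of_nonneg_left (hspec w) (hL2nn w)
      _ = D0 * (vecL2 w)^2 := by ring
  have hcs : (β ⬝ᵥ (Sig *ᵥ w))^2 ≤ (β ⬝ᵥ (Sig *ᵥ β)) * (w ⬝ᵥ (Sig *ᵥ w)) :=
    cs_psd hSig.posSemidef β w
  have hw4 : ((vecL2 w)^2)^2 ≤ (β ⬝ᵥ (Sig *ᵥ β)) * (D0 * (vecL2 w)^2) := by
    have h5 : (vecL2 w)^2 = β ⬝ᵥ (Sig *ᵥ w) := by rw [vecL2, vecL2_sq, hww]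
    conv_lhs => rw [h5]
    exact le_trans hcs (mul_le_mul_of_nonneg_left hwSw hA)
  have hw2 : (vecL2 w)^2 ≤ D0 * (β ⬝ᵥ (Sig *ᵥ β)) := by
    have h6 := mul_le_mul_of_nonneg_right hw4 (le_of_lt (inv_pos.mpr (pow_pos hwpos 2)))
    rw [pow_two ((vecL2 w)^2), mul_assoc, mul_inv_cancel₀ (by positivity), mul_one] at h6
    calc (vecL2 w)^2 ≤ β ⬝ᵥ (Sig *ᵥ β) * (D0 * (vecL2 w)^2) * ((vecL2 w)^2)⁻¹ := h6
      _ = D0 * (β ⬝ᵥ (Sig *ᵥ β)) * ((vecL2 w)^2 * ((vecL2 w)^2)⁻¹) := by ring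
      _ = D0 * (β ⬝ᵥ (Sig *ᵥ β)) := by rw [mul_inv_cancel₀ (by positivity), mul_one]
  have hwle : vecL2 w ≤ Real.sqrt D0 * Real.sqrt (β ⬝ᵥ (Sig *ᵥ β)) := by
    rw [← Real.sqrt_mul hD0]
    exact my_le_sqrt (hL2nn w) hw2
  -- assemble
  have hη' : η ≠ 0 := ne_of_gt hη
  calc vecL1 β ≤ Real.sqrt s * vecL2 β := hl1
    _ ≤ Real.sqrt s * ((vecL2 w) / η) := by
        refine mul_le_mul_of_nonneg_left ?_ (Real.sqrt_nonneg _)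
        rw [le_div_iff₀ hη, mul_comm]
        exact hRE'
    _ ≤ Real.sqrt s * (Real.sqrt D0 * Real.sqrt (β ⬝ᵥ (Sig *ᵥ β)) / η) := by
        refine mul_le_mul_of_nonneg_left ?_ (Real.sqrt_nonneg _)
        exact div_le_div_of_nonneg_right hwle hη.le
    _ = Real.sqrt (D0 * s) / η * Real.sqrt (β ⬝ᵥ (Sig *ᵥ β)) := by
        rw [Real.sqrt_mul hD0]
        ring
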